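/- Let N be a nilpotent skew-Hermitian endomorphism of (E, Ω) with a single Jordan block (i.e. dim(E/NE) = 1, dim E = n). Then there exists a Jordan basis e_1, …, e_n for N (with N e_j = e_{j−1}, N e_1 = 0) in which the matrix of Ω is antidiagonal: Ω(e_j, e_k) = 0 unless j + k = n + 1. -/

import Mathlib

/-- If a nilpotent skew-Hermitian `N` on an `n`-dimensional `(E, Ω)` is a single Jordan
block (`N^n = 0`, `N^{n-1} ≠ 0`), there is a Jordan basis in which the matrix of `Ω`
is antidiagonal. -/
theorem stmt9 {E : Type*} [AddCommGroup E] [Module ℂ E] [FiniteDimensional ℂ E]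
    (Ω : E → E → ℂ)
    (hΩadd : ∀ u u' v, Ω (u + u') v = Ω u v + Ω u' v)
    (hΩsmul : ∀ (a : ℂ) (u v : E), Ω (a • u) v = a * Ω u v)
    (hΩherm : ∀ u v, (starRingEnd ℂ) (Ω u v) = Ω v u)
    (hΩnd : ∀ u, (∀ v, Ω u v = 0) → u = 0)
    (N : Module.End ℂ E)
    (hskew : ∀ u v, Ω (N u) v + Ω u (N v) = 0)
    (n : ℕ) (hn : Module.finrank ℂ E = n)
    (hNn : N ^ n = 0) (hNn1 : N ^ (n - 1) ≠ 0) :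
    ∃ b : Module.Basis (Fin n) ℂ E,
      (∀ i : Fin n, N (b i) =
        if 0 < (i : ℕ) then b ⟨(i : ℕ) - 1, lt_of_le_of_lt (Nat.sub_le _ _) i.isLt⟩ else 0) ∧
      (∀ i j : Fin n, (i : ℕ) + (j : ℕ) + 1 ≠ n → Ω (b i) (b j) = 0) := by
  classical
  have hn1 : 1 ≤ n := by
    by_contra h
    have hn0 : n = 0 := by omega
    exact hNn1 (by rw [hn0] at hNn ⊢; exact hNn)
  haveI : Nonempty (Fin n) := ⟨⟨0, hn1⟩⟩
  have hconj_inj : Function.Injective (starRingEnd ℂ) := RingHom.injective _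
  have hΩaddr : ∀ u v v', Ω u (v + v') = Ω u v + Ω u v' := by
    intro u v v'
    apply hconj_inj
    rw [hΩherm, map_add, hΩherm, hΩherm, hΩadd]
  have hΩsmulr : ∀ (a : ℂ) (u v : E), Ω u (a • v) = (starRingEnd ℂ) a * Ω u v := by
    intro a u v
    apply hconj_inj
    rw [hΩherm, hΩsmul, map_mul, hΩherm]
    simp
  have hΩ0r : ∀ u, Ω u 0 = 0 := by
    intro u
    have := hΩsmulr 0 u 0
    simpa using this
  have hskew' : ∀ u v, Ω (N u) v = - Ω u (N v) := by
    intro u v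
    have := hskew u v
    linear_combination this
  have hskewpow : ∀ (a : ℕ) (u v : E), Ω ((N ^ a) u) v = (-1 : ℂ) ^ a * Ω u ((N ^ a) v) := by
    intro a
    induction a with
    | zero => intro u v; simp
    | succ a ih =>
      intro u v
      have h1 : (N ^ (a + 1)) u = (N ^ a) (N u) := by
        rw [pow_succ, Module.End.mul_apply]
      have h2 : N ((N ^ a) v) = (N ^ (a + 1)) v := by
        rw [pow_succ', Module.End.mul_apply]
      rw [h1, ih, hskew', h2]
      ring
  have hpowapp : ∀ (a b : ℕ) (w : E), (N ^ a) ((N ^ b) w) = (N ^ (a + b)) w := by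
    intro a b w
    rw [← Module.End.mul_apply, ← pow_add]
  have hNhigh : ∀ k, n ≤ k → ∀ w : E, (N ^ k) w = 0 := by
    intro k hk w
    have h1 : N ^ k = N ^ (k - n) * N ^ n := by
      rw [← pow_add]
      congr 1
      omega
    rw [h1, Module.End.mul_apply, hNn]
    simp
  have hfhigh : ∀ (v : E) (k : ℕ), n ≤ k → Ω v ((N ^ k) v) = 0 := by
    intro v k hk
    rw [hNhigh k hk, hΩ0r]
  have hfconj : ∀ (v : E) (k : ℕ),
      (starRingEnd ℂ) (Ω v ((N ^ k) v)) = (-1 : ℂ) ^ k * Ω v ((N ^ k) v) := by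
    intro v k
    rw [hΩherm, hskewpow]
  -- linear independence of the iterates
  have hli : ∀ v : E, (N ^ (n - 1)) v ≠ 0 →
      LinearIndependent ℂ (fun i : Fin n => (N ^ (i : ℕ)) v) := by
    intro v hv
    rw [Fintype.linearIndependent_iff]
    intro g hg
    suffices h : ∀ j : ℕ, ∀ hj : j < n, g ⟨j, hj⟩ = 0 by
      intro i
      have := h i i.isLt
      simpa using this
    intro j
    induction j using Nat.strong_induction_on with
    | _ j ih =>
      intro hj
      have happ : ∑ i : Fin n, (N ^ (n - 1 - j)) (g i • (N ^ (i : ℕ)) v) = 0 := by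
        rw [← map_sum, hg, map_zero]
      have hterm : ∀ i : Fin n, (N ^ (n - 1 - j)) (g i • (N ^ (i : ℕ)) v)
          = g i • (N ^ (n - 1 - j + (i : ℕ))) v := by
        intro i
        rw [map_smul, hpowapp]
      rw [Finset.sum_congr rfl (fun i _ => hterm i)] at happ
      have hsingle : ∑ i : Fin n, g i • (N ^ (n - 1 - j + (i : ℕ))) v
          = g ⟨j, hj⟩ • (N ^ (n - 1)) v := by
        rw [Finset.sum_eq_single (⟨j, hj⟩ : Fin n)]
        · have he : n - 1 - j + j = n - 1 := by omega
          rw [he]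
        · intro i _ hne
          have hne' : (i : ℕ) ≠ j := fun h => hne (Fin.ext h)
          rcases lt_or_gt_of_ne hne' with hlt | hgt
          · have := ih (i : ℕ) hlt i.isLt
            have hi : (⟨(i : ℕ), i.isLt⟩ : Fin n) = i := by
              ext; rfl
            rw [hi] at this
            rw [this, zero_smul]
          · rw [hNhigh (n - 1 - j + (i : ℕ)) (by omega) v, smul_zero]
        · intro h
          exact absurd (Finset.mem_univ _) h
      rw [hsingle] at happ
      rcases smul_eq_zero.mp happ with h | h
      · exact h
      · exact absurd h hv
  have hcard : Fintype.card (Fin n) = Module.finrank ℂ E := by simp [hn]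
  -- sum rule in the second argument
  have hΩsumr : ∀ (u : E) (s : Finset (Fin n)) (f : Fin n → E),
      Ω u (∑ i ∈ s, f i) = ∑ i ∈ s, Ω u (f i) := by
    intro u s f
    induction s using Finset.induction with
    | empty => simpa using hΩ0r u
    | insert _ _ hnotmem ih =>
      rw [Finset.sum_insert hnotmem, hΩaddr, ih, Finset.sum_insert hnotmem]
  -- nondegeneracy at n-1
  have hfne : ∀ v : E, (N ^ (n - 1)) v ≠ 0 → Ω v ((N ^ (n - 1)) v) ≠ 0 := by
    intro v hv
    obtain ⟨w, hw⟩ : ∃ w, Ω ((N ^ (n - 1)) v) w ≠ 0 := by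
      by_contra h
      push_neg at h
      exact hv (hΩnd _ h)
    have li := hli v hv
    let b0 := basisOfLinearIndependentOfCardEqFinrank li hcard
    have hb0 : ∀ i : Fin n, b0 i = (N ^ (i : ℕ)) v := fun i => by
      simp [b0, coe_basisOfLinearIndependentOfCardEqFinrank]
    have hw2 : Ω ((N ^ (n - 1)) v) w
        = ∑ i : Fin n, (starRingEnd ℂ) (b0.repr w i) * Ω ((N ^ (n - 1)) v) ((N ^ (i : ℕ)) v) := by
      conv_lhs => rw [← b0.sum_repr w]
      rw [hΩsumr]
      refine Finset.sum_congr rfl fun i _ => ?_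
      rw [hΩsmulr, hb0]
    have hzero : ∀ i : Fin n, (i : ℕ) ≠ 0 → Ω ((N ^ (n - 1)) v) ((N ^ (i : ℕ)) v) = 0 := by
      intro i hi
      rw [hskewpow, hpowapp, hNhigh (n - 1 + (i : ℕ)) (by omega) v, hΩ0r, mul_zero]
    intro hf
    apply hw
    rw [hw2]
    refine Finset.sum_eq_zero fun i _ => ?_
    by_cases hi : (i : ℕ) = 0
    · have : Ω ((N ^ (n - 1)) v) ((N ^ (i : ℕ)) v) = 0 := by
        rw [hi, hskewpow, pow_zero, Module.End.one_apply, hf, mul_zero]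
      rw [this, mul_zero]
    · rw [hzero i hi, mul_zero]
  -- the main induction: killing the low moments
  have main : ∀ m, m ≤ n - 1 → ∃ v : E, (N ^ (n - 1)) v ≠ 0 ∧
      ∀ k, n - 1 - m ≤ k → k + 2 ≤ n → Ω v ((N ^ k) v) = 0 := by
    intro m
    induction m with
    | zero =>
      intro _
      obtain ⟨v, hv⟩ : ∃ v : E, (N ^ (n - 1)) v ≠ 0 := by
        by_contra h
        push_neg at h
        exact hNn1 (LinearMap.ext h)
      refine ⟨v, hv, ?_⟩
      intro k hk1 hk2
      exfalso
      omega
    | succ m ih =>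
      intro hm1
      obtain ⟨v, hv, hvk⟩ := ih (by omega)
      obtain ⟨M, hMsum⟩ : ∃ M, M + (m + 1) = n - 1 := ⟨n - 2 - m, by omega⟩
      have hF : Ω v ((N ^ (n - 1)) v) ≠ 0 := hfne v hv
      set s : ℂ := (-1 : ℂ) ^ (m + 1) with hsdef
      have hs : s * s = 1 := by
        rw [hsdef, ← pow_add]
        exact Even.neg_one_pow ⟨m + 1, rfl⟩
      have hconjs : (starRingEnd ℂ) s = s := by
        rw [hsdef]
        simp
      set c : ℂ := s * (-(Ω v ((N ^ M) v)) / Ω v ((N ^ (n - 1)) v)) / 2 with hcdef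
      have hcF : (starRingEnd ℂ) (Ω v ((N ^ (n - 1)) v))
          = (-1 : ℂ) ^ (n - 1) * Ω v ((N ^ (n - 1)) v) := hfconj v (n - 1)
      have hcfM : (starRingEnd ℂ) (Ω v ((N ^ M) v))
          = (-1 : ℂ) ^ M * Ω v ((N ^ M) v) := hfconj v M
      have hsplit : ((-1 : ℂ)) ^ (n - 1) = (-1 : ℂ) ^ M * s := by
        rw [hsdef, ← pow_add, hMsum]
      have hMne : ((-1 : ℂ)) ^ M ≠ 0 := pow_ne_zero _ (by norm_num)
      have hsne : s ≠ 0 := by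
        rw [hsdef]
        exact pow_ne_zero _ (by norm_num)
      have hkey : (starRingEnd ℂ) c + s * c
          = -(Ω v ((N ^ M) v)) / Ω v ((N ^ (n - 1)) v) := by
        rw [hcdef, map_div₀, map_mul, hconjs, map_div₀, map_neg, hcfM, hcF, hsplit,
          map_ofNat]
        field_simp
        linear_combination (-Ω v ((N ^ M) v)) * hs
      refine ⟨v + c • (N ^ (m + 1)) v, ?_, ?_⟩
      · have heq : (N ^ (n - 1)) (v + c • (N ^ (m + 1)) v) = (N ^ (n - 1)) v := by
          rw [map_add, map_smul, hpowapp, hNhigh (n - 1 + (m + 1)) (by omega) v,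
            smul_zero, add_zero]
        rw [heq]
        exact hv
      · intro k hk1 hk2
        have hk1' : M ≤ k := by omega
        have hexp : Ω (v + c • (N ^ (m + 1)) v) ((N ^ k) (v + c • (N ^ (m + 1)) v))
            = Ω v ((N ^ k) v)
              + (starRingEnd ℂ) c * Ω v ((N ^ (k + (m + 1))) v)
              + c * (s * Ω v ((N ^ (k + (m + 1))) v))
              + c * ((starRingEnd ℂ) c * (s * Ω v ((N ^ (k + (m + 1) + (m + 1))) v))) := by
          have hNk : (N ^ k) (v + c • (N ^ (m + 1)) v)
              = (N ^ k) v + c • (N ^ (k + (m + 1))) v := by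
            rw [map_add, map_smul, hpowapp]
          rw [hNk, hΩadd, hΩaddr, hΩaddr, hΩsmul, hΩsmul, hΩsmulr, hΩsmulr]
          have ha : Ω ((N ^ (m + 1)) v) ((N ^ k) v)
              = s * Ω v ((N ^ (k + (m + 1))) v) := by
            rw [hskewpow, hpowapp, hsdef]
            have he : m + 1 + k = k + (m + 1) := by omega
            rw [he]
          have hb : Ω ((N ^ (m + 1)) v) ((N ^ (k + (m + 1))) v)
              = s * Ω v ((N ^ (k + (m + 1) + (m + 1))) v) := by
            rw [hskewpow, hpowapp, hsdef]
            have he : m + 1 + (k + (m + 1)) = k + (m + 1) + (m + 1) := by omega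
            rw [he]
          rw [ha, hb]
          ring
        rw [hexp]
        have hhigh2 : Ω v ((N ^ (k + (m + 1) + (m + 1))) v) = 0 :=
          hfhigh v _ (by omega)
        rcases eq_or_lt_of_le hk1' with heq | hlt
        · -- k = M
          obtain rfl := heq
          rw [hhigh2, hMsum]
          have hgoal : Ω v ((N ^ M) v)
              + ((starRingEnd ℂ) c + s * c) * Ω v ((N ^ (n - 1)) v) = 0 := by
            rw [hkey]
            field_simp
            ring
          calc Ω v ((N ^ M) v) + (starRingEnd ℂ) c * Ω v ((N ^ (n - 1)) v)
                + c * (s * Ω v ((N ^ (n - 1)) v)) + c * ((starRingEnd ℂ) c * (s * 0))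
              = Ω v ((N ^ M) v)
                + ((starRingEnd ℂ) c + s * c) * Ω v ((N ^ (n - 1)) v) := by ring
            _ = 0 := hgoal
        · -- k > M
          have h1 : Ω v ((N ^ k) v) = 0 := hvk k (by omega) hk2
          have h2 : Ω v ((N ^ (k + (m + 1))) v) = 0 := hfhigh v _ (by omega)
          rw [h1, h2, hhigh2]
          ring
  -- conclude
  obtain ⟨v, hv, hvk⟩ := main (n - 1) le_rfl
  have hfzero : ∀ k, k ≠ n - 1 → Ω v ((N ^ k) v) = 0 := by
    intro k hk
    rcases le_or_gt (k + 2) n with h | h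
    · exact hvk k (by omega) h
    · exact hfhigh v k (by omega)
  have li := hli v hv
  let b0 := basisOfLinearIndependentOfCardEqFinrank li hcard
  have hb0 : ∀ i : Fin n, b0 i = (N ^ (i : ℕ)) v := fun i => by
    simp [b0, coe_basisOfLinearIndependentOfCardEqFinrank]
  let b := b0.reindex Fin.revPerm
  have hb : ∀ i : Fin n, b i = (N ^ (n - 1 - (i : ℕ))) v := by
    intro i
    have hcoe : ((Fin.revPerm i : Fin n) : ℕ) = n - 1 - (i : ℕ) := by
      show ((Fin.rev i : Fin n) : ℕ) = n - 1 - (i : ℕ)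
      rw [Fin.val_rev]
      omega
    rw [Module.Basis.reindex_apply, Fin.revPerm_symm, hb0, hcoe]
  refine ⟨b, ?_, ?_⟩
  · intro i
    by_cases hi : 0 < (i : ℕ)
    · rw [if_pos hi, hb, hb]
      have he : n - 1 - ((i : ℕ) - 1) = (n - 1 - (i : ℕ)) + 1 := by
        have := i.isLt
        omega
      rw [he, pow_succ', Module.End.mul_apply]
    · rw [if_neg hi]
      have hi0 : (i : ℕ) = 0 := by omega
      rw [hb, hi0]
      have : N ((N ^ (n - 1 - 0)) v) = (N ^ n) v := by
        rw [← Module.End.mul_apply, ← pow_succ']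
        congr 2
        omega
      rw [this, hNn]
      simp
  · intro i j hij
    rw [hb, hb, hskewpow, hpowapp]
    have : Ω v ((N ^ (n - 1 - (i : ℕ) + (n - 1 - (j : ℕ)))) v) = 0 := by
      apply hfzero
      have hi := i.isLt
      have hj := j.isLt
      omega
    rw [this, mul_zero]
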